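/- Soundness of the inductivity check: let 𝒫 be a predicate on configurations and L a set of traps (one inductive-invariant family per instance size). Suppose (1) 𝒫 holds for the initial configuration of every instance, (2) every initial configuration intersects every compatible trap in L, (3) each O ∈ L is inductive for its instance, and (4) for all configurations C, C', if C intersects all compatible traps of L, 𝒫(C) holds, and C ⊢ C', then 𝒫(C'). Then 𝒫 holds for every reachable configuration of every instance. -/
import Mathlib


/-- soundness of the inductivity check -- if the safety predicate holds
    initially, all traps of `L` hold initially and are inductive, and the predicate is
    preserved from configurations intersecting all compatible traps, then it holds for
    every reachable configuration of every instance. -/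
theorem inductivity_check_sound {Config Pow : ℕ → Type*}
    (init : ∀ N : ℕ, Config N)
    (step : ∀ {N : ℕ}, Config N → Config N → Prop)
    (inter : ∀ {N : ℕ}, Config N → Pow N → Prop)
    (L : ∀ N : ℕ, Set (Pow N))
    (P : ∀ {N : ℕ}, Config N → Prop)
    (h₁ : ∀ N, P (init N))
    (h₂ : ∀ N, ∀ O ∈ L N, inter (init N) O)
    (h₃ : ∀ N, ∀ O ∈ L N, ∀ C C' : Config N, step C C' → inter C O → inter C' O)
    (h₄ : ∀ (N : ℕ) (C C' : Config N),
      (∀ O ∈ L N, inter C O) → P C → step C C' → P C') :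
    ∀ (N : ℕ) (C : Config N),
      Relation.ReflTransGen (fun a b : Config N => step a b) (init N) C → P C := by
  intro N C h
  suffices hs : P C ∧ ∀ O ∈ L N, inter C O from hs.1
  induction h with
  | refl => exact ⟨h₁ N, h₂ N⟩
  | tail _ hstep ih =>
    exact ⟨h₄ N _ _ ih.2 ih.1 hstep, fun O hO => h₃ N O hO _ _ hstep (ih.2 O hO)⟩
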